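/- arXiv:1107.0504 — 4 statements merged into one kernel-verified Lean document; each statement's English description precedes it below -/
import Mathlib

section
/- The number of elements of GL_n(F_q) (n ≥ 2) that are conjugate to the transvection d_1 (the identity matrix with an additional 1 in position (1,2)) equals (q^n - 1)(q^{n-1} - 1)/(q - 1). -/
open Matrix

set_option linter.unusedSectionVars false

namespace Stmt6Aux

variable {F : Type*} [Field F] [Fintype F] [DecidableEq F]

section matrixlemmas

variable {k : ℕ}

lemma mul_vecMulVec (A : Matrix (Fin k) (Fin k) F) (v w : Fin k → F) :
    A * vecMulVec v w = vecMulVec (A *ᵥ v) w := by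
  ext i j
  simp [Matrix.mul_apply, vecMulVec_apply, Matrix.mulVec, dotProduct,
    Finset.sum_mul, mul_assoc]

lemma vecMulVec_mul (A : Matrix (Fin k) (Fin k) F) (v w : Fin k → F) :
    vecMulVec v w * A = vecMulVec v (w ᵥ* A) := by
  ext i j
  simp [Matrix.mul_apply, vecMulVec_apply, Matrix.vecMul, dotProduct,
    Finset.mul_sum, mul_assoc, mul_left_comm]

lemma vecMulVec_smul_smul (c : Fˣ) (v w : Fin k → F) :
    vecMulVec ((c : F) • v) (((c⁻¹ : Fˣ) : F) • w) = vecMulVec v w := by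
  ext i j
  simp only [vecMulVec_apply, Pi.smul_apply, smul_eq_mul]
  field_simp
  rw [mul_right_comm (c : F), Units.mul_inv, one_mul]

lemma vecMulVec_eq_scalar {v w v' w' : Fin k → F} (hv' : v' ≠ 0) (hw' : w' ≠ 0)
    (h : vecMulVec v w = vecMulVec v' w') :
    ∃ c : Fˣ, v = (c : F) • v' ∧ w = ((c⁻¹ : Fˣ) : F) • w' := by
  obtain ⟨i, hi⟩ := Function.ne_iff.mp hv'
  obtain ⟨j, hj⟩ := Function.ne_iff.mp hw'
  simp only [Pi.zero_apply] at hi hj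
  have key : ∀ a b, v a * w b = v' a * w' b := by
    intro a b
    have := congrFun (congrFun h a) b
    simpa [vecMulVec_apply] using this
  have hvi : v i ≠ 0 := by
    intro h0
    have h2 := key i j
    rw [h0, zero_mul] at h2
    exact (mul_ne_zero hi hj) h2.symm
  refine ⟨Units.mk0 (v i / v' i) (div_ne_zero hvi hi), funext fun a => ?_, funext fun b => ?_⟩
  · have h1 := key a j
    have h2 := key i j
    have h3 : v a * v' i * w' j = v i * v' a * w' j := by
      calc v a * v' i * w' j = v a * (v' i * w' j) := by ring
        _ = v a * (v i * w j) := by rw [h2]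
        _ = (v a * w j) * v i := by ring
        _ = (v' a * w' j) * v i := by rw [h1]
        _ = v i * v' a * w' j := by ring
    have h4 := mul_right_cancel₀ hj h3
    simp only [Pi.smul_apply, smul_eq_mul, Units.val_mk0]
    field_simp
    linear_combination h4
  · have h1 := key i b
    simp only [Pi.smul_apply, smul_eq_mul, ← Units.val_inv_eq_inv_val, Units.val_mk0]
    rw [Units.val_inv_eq_inv_val, Units.val_mk0]
    field_simp
    linear_combination h1

/-- The linear functional `x ↦ x ⬝ᵥ v`. -/
def dotL (v : Fin k → F) : (Fin k → F) →ₗ[F] F where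
  toFun w := w ⬝ᵥ v
  map_add' x y := add_dotProduct x y v
  map_smul' c x := smul_dotProduct c x v

lemma dotL_surjective {v : Fin k → F} (hv : v ≠ 0) : Function.Surjective (dotL (F := F) v) := by
  obtain ⟨i, hi⟩ := Function.ne_iff.mp hv
  simp only [Pi.zero_apply] at hi
  intro c
  refine ⟨Pi.single i (c * (v i)⁻¹), ?_⟩
  simp only [dotL, LinearMap.coe_mk, AddHom.coe_mk, single_dotProduct]
  field_simp

lemma finrank_ker_dotL {v : Fin k → F} (hv : v ≠ 0) :
    Module.finrank F (LinearMap.ker (dotL (F := F) v)) = k - 1 := by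
  have h1 := LinearMap.finrank_range_add_finrank_ker (dotL (F := F) v)
  rw [LinearMap.range_eq_top.mpr (dotL_surjective hv)] at h1
  simp only [finrank_top, Module.finrank_self, Module.finrank_fintype_fun_eq_card,
    Fintype.card_fin] at h1
  omega

lemma card_ker_dotL {v : Fin k → F} (hv : v ≠ 0) :
    Nat.card (LinearMap.ker (dotL (F := F) v)) = Fintype.card F ^ (k - 1) := by
  have : Fintype (LinearMap.ker (dotL (F := F) v)) := Fintype.ofFinite _
  rw [Nat.card_eq_fintype_card, Module.card_eq_pow_finrank (K := F), finrank_ker_dotL hv]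

end matrixlemmas

end Stmt6Aux

namespace Part2
variable {F : Type*} [Field F] [Fintype F] [DecidableEq F] {k : ℕ}

lemma nat_card_ne_zero (M : Type*) [Finite M] [Zero M] :
    Nat.card {x : M // x ≠ 0} = Nat.card M - 1 := by
  classical
  have : Fintype M := Fintype.ofFinite M
  simp [Nat.card_eq_fintype_card, Fintype.card_subtype_compl, Fintype.card_subtype_eq]

lemma card_fiber {v : Fin k → F} (hv : v ≠ 0) :
    Nat.card {w : Fin k → F // w ≠ 0 ∧ w ⬝ᵥ v = 0} = Fintype.card F ^ (k - 1) - 1 := by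
  have e : {w : Fin k → F // w ≠ 0 ∧ w ⬝ᵥ v = 0}
      ≃ {x : LinearMap.ker (Stmt6Aux.dotL (F := F) v) // x ≠ 0} :=
    { toFun := fun w => ⟨⟨w.1, LinearMap.mem_ker.mpr w.2.2⟩, by
        simp only [ne_eq, Submodule.mk_eq_zero]; exact w.2.1⟩
      invFun := fun x => ⟨x.1.1, ⟨by
        intro h0
        exact x.2 (Subtype.ext h0), LinearMap.mem_ker.mp x.1.2⟩⟩
      left_inv := fun w => rfl
      right_inv := fun x => rfl }
  rw [Nat.card_congr e, nat_card_ne_zero, Stmt6Aux.card_ker_dotL hv]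

lemma card_pairs :
    Nat.card {p : (Fin k → F) × (Fin k → F) // p.1 ≠ 0 ∧ p.2 ≠ 0 ∧ p.2 ⬝ᵥ p.1 = 0}
      = (Fintype.card F ^ k - 1) * (Fintype.card F ^ (k - 1) - 1) := by
  classical
  have e : {p : (Fin k → F) × (Fin k → F) // p.1 ≠ 0 ∧ p.2 ≠ 0 ∧ p.2 ⬝ᵥ p.1 = 0}
      ≃ Σ v : {v : Fin k → F // v ≠ 0}, {w : Fin k → F // w ≠ 0 ∧ w ⬝ᵥ (v : Fin k → F) = 0} :=
    { toFun := fun p => ⟨⟨p.1.1, p.2.1⟩, ⟨p.1.2, p.2.2.1, p.2.2.2⟩⟩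
      invFun := fun x => ⟨(x.1.1, x.2.1), ⟨x.1.2, x.2.2.1, x.2.2.2⟩⟩
      left_inv := fun p => rfl
      right_inv := fun x => rfl }
  rw [Nat.card_congr e, Nat.card_eq_fintype_card, Fintype.card_sigma]
  have hfib : ∀ v : {v : Fin k → F // v ≠ 0},
      Fintype.card {w : Fin k → F // w ≠ 0 ∧ w ⬝ᵥ (v : Fin k → F) = 0}
        = Fintype.card F ^ (k - 1) - 1 := fun v => by
    rw [← Nat.card_eq_fintype_card, card_fiber v.2]
  rw [Finset.sum_congr rfl (fun v _ => hfib v), Finset.sum_const, Finset.card_univ, smul_eq_mul]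
  congr 1
  rw [← Nat.card_eq_fintype_card, nat_card_ne_zero, Nat.card_eq_fintype_card]
  congr 1
  simp [Fintype.card_fun]

end Part2

namespace Conj
open Stmt6Aux
variable {F : Type*} [Field F] [Fintype F] [DecidableEq F] {m : ℕ}

lemma conj_form (d g : GL (Fin (m + 2)) F)
    (hd : (d : Matrix (Fin (m + 2)) (Fin (m + 2)) F)
       = 1 + vecMulVec (Pi.single 0 1) (Pi.single 1 1))
    (h : IsConj d g) :
    ∃ v w : Fin (m + 2) → F, v ≠ 0 ∧ w ≠ 0 ∧ w ⬝ᵥ v = 0 ∧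
      (g : Matrix (Fin (m + 2)) (Fin (m + 2)) F) = 1 + vecMulVec v w := by
  obtain ⟨c, hc⟩ := isConj_iff.mp h
  set C : Matrix (Fin (m + 2)) (Fin (m + 2)) F := (c : Matrix (Fin (m + 2)) (Fin (m + 2)) F)
    with hC
  set C' : Matrix (Fin (m + 2)) (Fin (m + 2)) F :=
    ((c⁻¹ : GL (Fin (m + 2)) F) : Matrix (Fin (m + 2)) (Fin (m + 2)) F) with hC'
  have hCC' : C * C' = 1 := by rw [hC, hC', ← Units.val_mul, mul_inv_cancel, Units.val_one]
  have hC'C : C' * C = 1 := by rw [hC, hC', ← Units.val_mul, inv_mul_cancel, Units.val_one]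
  have h10 : (1 : Fin (m + 2)) ≠ 0 := (Fin.zero_ne_one' (n := m + 1)).symm
  refine ⟨C *ᵥ Pi.single 0 1, Pi.single 1 1 ᵥ* C', ?_, ?_, ?_, ?_⟩
  · intro h0
    have h1 : C' *ᵥ (C *ᵥ Pi.single 0 1) = 0 := by rw [h0, Matrix.mulVec_zero]
    rw [Matrix.mulVec_mulVec, hC'C, Matrix.one_mulVec] at h1
    have h2 := congrFun h1 0
    rw [Pi.single_eq_same] at h2
    exact one_ne_zero h2
  · intro h0
    have h1 : (Pi.single 1 1 ᵥ* C') ᵥ* C = 0 := by rw [h0, Matrix.zero_vecMul]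
    rw [Matrix.vecMul_vecMul, hC'C, Matrix.vecMul_one] at h1
    have h2 := congrFun h1 1
    rw [Pi.single_eq_same] at h2
    exact one_ne_zero h2
  · rw [Matrix.dotProduct_mulVec, Matrix.vecMul_vecMul, hC'C, Matrix.vecMul_one,
      single_dotProduct, Pi.single_eq_of_ne h10, one_mul]
  · have hg : (g : Matrix (Fin (m + 2)) (Fin (m + 2)) F) = C * (d : Matrix _ _ F) * C' := by
      rw [← hc]; simp [Units.val_mul, hC, hC']
    rw [hg, hd, mul_add, mul_one, add_mul, hCC', Stmt6Aux.mul_vecMulVec, Stmt6Aux.vecMulVec_mul]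

lemma exists_conj (d : GL (Fin (m + 2)) F)
    (hd : (d : Matrix (Fin (m + 2)) (Fin (m + 2)) F)
       = 1 + vecMulVec (Pi.single 0 1) (Pi.single 1 1))
    {v w : Fin (m + 2) → F} (hv : v ≠ 0) (hw : w ≠ 0) (hwv : w ⬝ᵥ v = 0) :
    ∃ g : GL (Fin (m + 2)) F, IsConj d g ∧
      (g : Matrix (Fin (m + 2)) (Fin (m + 2)) F) = 1 + vecMulVec v w := by
  classical
  set L := Stmt6Aux.dotL (F := F) w with hL
  have hLapp : ∀ x, L x = w ⬝ᵥ x := fun x => by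
    simp [hL, Stmt6Aux.dotL, dotProduct_comm]
  have hLv : v ∈ LinearMap.ker L := by
    rw [LinearMap.mem_ker, hLapp, hwv]
  set vb : LinearMap.ker L := ⟨v, hLv⟩ with hvb
  have hvb0 : vb ≠ 0 := by
    intro h0
    exact hv (by simpa [hvb] using congrArg Subtype.val h0)
  have hli : LinearIndepOn F id ({vb} : Set (LinearMap.ker L)) := .singleton hvb0
  let bS : Module.Basis _ F (LinearMap.ker L) := Module.Basis.extend hli
  have : Fintype (hli.extend (Set.subset_univ ({vb} : Set (LinearMap.ker L)))) :=
    FiniteDimensional.fintypeBasisIndex bS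
  have hcard : Fintype.card (hli.extend (Set.subset_univ ({vb} : Set (LinearMap.ker L))))
      = m + 1 := by
    rw [← Module.finrank_eq_card_basis bS, Stmt6Aux.finrank_ker_dotL hw]
    omega
  let e0 := (Fintype.equivFinOfCardEq hcard).symm
  let vs : hli.extend (Set.subset_univ ({vb} : Set (LinearMap.ker L))) :=
    ⟨vb, hli.subset_extend _ rfl⟩
  let e := (Equiv.swap (0 : Fin (m + 1)) (e0.symm vs)).trans e0
  let b0 := bS.reindex e.symm
  have hb00 : b0 0 = vb := by
    simp only [b0, Module.Basis.reindex_apply, Equiv.symm_symm]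
    have : e 0 = vs := by simp [e]
    rw [this]
    simp [bS, Module.Basis.coe_extend, vs]
  obtain ⟨i, hi⟩ := Function.ne_iff.mp hw
  simp only [Pi.zero_apply] at hi
  set u : Fin (m + 2) → F := Pi.single i (w i)⁻¹ with hu
  have hLu : L u = 1 := by
    rw [hLapp, hu, dotProduct_single]
    field_simp
  have hmk1 : ∀ (c : F), ∀ x ∈ LinearMap.ker L, c • u + x = 0 → c = 0 := by
    intro c x hx h0
    have := congrArg L h0
    rw [map_add, _root_.map_smul, hLu, LinearMap.mem_ker.mp hx, map_zero] at this
    simpa using this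
  have hmk2 : ∀ z : Fin (m + 2) → F, ∃ c : F, z + c • u ∈ LinearMap.ker L := by
    intro z
    refine ⟨-(L z), ?_⟩
    rw [LinearMap.mem_ker, map_add, _root_.map_smul, hLu]
    simp
  let B' := Module.Basis.mkFinCons u b0 hmk1 hmk2
  let B : Module.Basis (Fin (m + 2)) F (Fin (m + 2) → F) := B'.reindex (Equiv.swap 0 1)
  have hB'c : (B' : Fin (m + 1 + 1) → (Fin (m + 2) → F)) = Fin.cons u ((↑) ∘ b0) :=
    Module.Basis.coe_mkFinCons u b0 hmk1 hmk2
  have hBapp : ∀ j, B j = B' ((Equiv.swap (0 : Fin (m + 2)) 1) j) := by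
    intro j
    simp [B, Module.Basis.reindex_apply, Equiv.symm_symm, Equiv.swap_apply_def]
  have hB0 : B 0 = v := by
    rw [hBapp 0, Equiv.swap_apply_left, congrFun hB'c 1,
      show (1 : Fin (m + 2)) = Fin.succ 0 from (Fin.succ_zero_eq_one' (n := m + 1)).symm,
      Fin.cons_succ]
    simp [hb00, hvb]
  have hB1 : B 1 = u := by
    rw [hBapp 1, Equiv.swap_apply_right, congrFun hB'c 0, Fin.cons_zero]
  have key : ∀ j, w ⬝ᵥ B j = (Pi.single (1 : Fin (m + 2)) (1 : F) : Fin (m + 2) → F) j := by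
    intro j
    rcases eq_or_ne j 1 with rfl | hj1
    · rw [hB1, ← hLapp, hLu, Pi.single_eq_same]
    · rw [Pi.single_eq_of_ne hj1]
      rcases eq_or_ne j 0 with rfl | hj0
      · rw [hB0]; exact hwv
      · rw [hBapp j, Equiv.swap_apply_of_ne_of_ne hj0 hj1]
        obtain ⟨j', rfl⟩ := Fin.eq_succ_of_ne_zero hj0
        rw [congrFun hB'c j'.succ, Fin.cons_succ]
        have hmem := (b0 j').2
        rw [LinearMap.mem_ker, hLapp] at hmem
        exact hmem
  -- the change of basis matrix
  set P : Matrix (Fin (m + 2)) (Fin (m + 2)) F := (Pi.basisFun F (Fin (m + 2))).toMatrix B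
    with hPdef
  have hPapp : ∀ i j, P i j = B j i := by
    intro i j
    simp [hPdef, Module.Basis.toMatrix_apply]
  letI : Invertible P := (Pi.basisFun F (Fin (m + 2))).invertibleToMatrix B
  set gP : GL (Fin (m + 2)) F := unitOfInvertible P with hgP
  have hPD : P * (d : Matrix (Fin (m + 2)) (Fin (m + 2)) F) = (1 + vecMulVec v w) * P := by
    rw [hd, mul_add, add_mul, mul_one, one_mul, Stmt6Aux.mul_vecMulVec, Stmt6Aux.vecMulVec_mul]
    congr 1
    have h1 : P *ᵥ Pi.single 0 1 = v := by
      ext i'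
      rw [Matrix.mulVec_single]
      change P i' 0 * 1 = v i'
      rw [hPapp, hB0, mul_one]
    have h2 : w ᵥ* P = Pi.single 1 1 := by
      ext j
      have : (w ᵥ* P) j = w ⬝ᵥ B j := by
        simp [Matrix.vecMul, dotProduct, hPapp]
      rw [this, key]
    rw [h1, h2]
  refine ⟨gP * d * gP⁻¹, isConj_iff.mpr ⟨gP, rfl⟩, ?_⟩
  have hgPv : (gP : Matrix (Fin (m + 2)) (Fin (m + 2)) F) = P := rfl
  calc ((gP * d * gP⁻¹ : GL (Fin (m + 2)) F) : Matrix (Fin (m + 2)) (Fin (m + 2)) F)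
      = P * (d : Matrix (Fin (m + 2)) (Fin (m + 2)) F) * ((gP⁻¹ : GL (Fin (m + 2)) F) : Matrix (Fin (m + 2)) (Fin (m + 2)) F) := by
        simp [Units.val_mul, hgPv]
    _ = (1 + vecMulVec v w) * ((gP : Matrix (Fin (m + 2)) (Fin (m + 2)) F) * ((gP⁻¹ : GL (Fin (m + 2)) F) : Matrix (Fin (m + 2)) (Fin (m + 2)) F)) := by
        rw [hPD, hgPv, mul_assoc]
    _ = 1 + vecMulVec v w := by
        rw [← Units.val_mul, mul_inv_cancel, Units.val_one, mul_one]

end Conj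

open Stmt6Aux in
theorem stmt_6 (F : Type*) [Field F] [Fintype F] [DecidableEq F]
    {n : ℕ} (hn : 2 ≤ n)
    (d : Matrix.GeneralLinearGroup (Fin n) F)
    (hd : (d : Matrix (Fin n) (Fin n) F)
        = Matrix.of (fun i j : Fin n =>
            if i = j then 1 else if (i : ℕ) = 0 ∧ (j : ℕ) = 1 then (1 : F) else 0)) :
    Nat.card {g : Matrix.GeneralLinearGroup (Fin n) F // IsConj d g}
        * (Fintype.card F - 1)
      = (Fintype.card F ^ n - 1) * (Fintype.card F ^ (n - 1) - 1) := by
  classical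
  obtain ⟨m, rfl⟩ : ∃ m, n = m + 2 := ⟨n - 2, by omega⟩
  have hd' : (d : Matrix (Fin (m + 2)) (Fin (m + 2)) F)
      = 1 + vecMulVec (Pi.single 0 1) (Pi.single 1 1) := by
    rw [hd]
    ext i j
    simp only [Matrix.of_apply, Matrix.add_apply, Matrix.one_apply, vecMulVec_apply,
      Pi.single_apply]
    have H1 : (i = 0) ↔ ((i : ℕ) = 0) := by rw [Fin.ext_iff]; simp
    have H2 : (j = 1) ↔ ((j : ℕ) = 1) := by rw [Fin.ext_iff]; simp
    have H3 : (i = j) ↔ ((i : ℕ) = (j : ℕ)) := Fin.ext_iff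
    by_cases h1 : (i : ℕ) = 0 <;> by_cases h2 : (j : ℕ) = 1 <;>
      by_cases h3 : (i : ℕ) = (j : ℕ) <;>
      simp [H1, H2, H3, h1, h2, h3] <;> omega
  choose V W hV hW hWV hMat using
    fun g : {g : Matrix.GeneralLinearGroup (Fin (m + 2)) F // IsConj d g} =>
      Conj.conj_form d g.1 hd' g.2
  let f : {g : Matrix.GeneralLinearGroup (Fin (m + 2)) F // IsConj d g} × Fˣ →
      {p : (Fin (m + 2) → F) × (Fin (m + 2) → F) // p.1 ≠ 0 ∧ p.2 ≠ 0 ∧ p.2 ⬝ᵥ p.1 = 0} :=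
    fun gc =>
      ⟨((gc.2 : F) • V gc.1, ((gc.2⁻¹ : Fˣ) : F) • W gc.1),
        ⟨smul_ne_zero (Units.ne_zero _) (hV gc.1),
         smul_ne_zero (Units.ne_zero _) (hW gc.1),
         by rw [smul_dotProduct, dotProduct_smul, hWV gc.1]; simp⟩⟩
  have hfbij : Function.Bijective f := by
    constructor
    · rintro ⟨g1, c1⟩ ⟨g2, c2⟩ heq
      have h1 : (c1 : F) • V g1 = (c2 : F) • V g2 :=
        congrArg (fun p => p.1.1) heq
      have h2 : ((c1⁻¹ : Fˣ) : F) • W g1 = ((c2⁻¹ : Fˣ) : F) • W g2 :=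
        congrArg (fun p => p.1.2) heq
      have hg : g1 = g2 := by
        have e1 : (g1.1 : Matrix (Fin (m + 2)) (Fin (m + 2)) F)
            = 1 + vecMulVec ((c1 : F) • V g1) (((c1⁻¹ : Fˣ) : F) • W g1) := by
          rw [vecMulVec_smul_smul, hMat g1]
        have e2 : (g2.1 : Matrix (Fin (m + 2)) (Fin (m + 2)) F)
            = 1 + vecMulVec ((c2 : F) • V g2) (((c2⁻¹ : Fˣ) : F) • W g2) := by
          rw [vecMulVec_smul_smul, hMat g2]
        have : (g1.1 : Matrix (Fin (m + 2)) (Fin (m + 2)) F) = g2.1 := by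
          rw [e1, h1, h2, ← e2]
        exact Subtype.ext (Units.ext this)
      subst hg
      obtain ⟨i, hi⟩ := Function.ne_iff.mp (hV g1)
      simp only [Pi.zero_apply] at hi
      have h3 := congrFun h1 i
      simp only [Pi.smul_apply, smul_eq_mul] at h3
      have : (c1 : F) = (c2 : F) := mul_right_cancel₀ hi h3
      exact Prod.ext rfl (Units.ext this)
    · rintro ⟨⟨v, w⟩, hv, hw, hwv⟩
      obtain ⟨g, hgconj, hgmat⟩ := Conj.exists_conj d hd' hv hw hwv
      set gs : {g : Matrix.GeneralLinearGroup (Fin (m + 2)) F // IsConj d g} := ⟨g, hgconj⟩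
        with hgs
      have hvw : vecMulVec v w = vecMulVec (V gs) (W gs) :=
        add_left_cancel (hgmat.symm.trans (hMat gs))
      obtain ⟨c, hcv, hcw⟩ := vecMulVec_eq_scalar (hV gs) (hW gs) hvw
      exact ⟨(gs, c), Subtype.ext (Prod.ext hcv.symm hcw.symm)⟩
  have hq : Nat.card Fˣ = Fintype.card F - 1 := by
    rw [Nat.card_eq_fintype_card, Fintype.card_units]
  calc Nat.card {g : Matrix.GeneralLinearGroup (Fin (m + 2)) F // IsConj d g}
        * (Fintype.card F - 1)
      = Nat.card ({g : Matrix.GeneralLinearGroup (Fin (m + 2)) F // IsConj d g} × Fˣ) := by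
        rw [Nat.card_prod, hq]
    _ = Nat.card {p : (Fin (m + 2) → F) × (Fin (m + 2) → F) //
          p.1 ≠ 0 ∧ p.2 ≠ 0 ∧ p.2 ⬝ᵥ p.1 = 0} := Nat.card_congr (Equiv.ofBijective f hfbij)
    _ = (Fintype.card F ^ (m + 2) - 1) * (Fintype.card F ^ (m + 2 - 1) - 1) :=
        Part2.card_pairs
end

section
/- Let k be a field of characteristic p > 0, and let N ⊆ k[x_1, ..., x_n] be a graded subspace closed under multiplication by k[x_1,...,x_n] (an ideal) and stable under all partial derivatives ∂/∂x_i. Then N is generated as an ideal by elements of the form f(x_1^p, ..., x_n^p), i.e., by p-th power polynomials f^p with f ∈ k[x_1,...,x_n]. -/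
open MvPolynomial

namespace Stmt9

variable {k : Type*} [Field k] {p n : ℕ} [Fact p.Prime] [CharP k p]

lemma finsupp_sub_single (s : Fin n →₀ ℕ) (i : Fin n) (h : s i = 0) :
    s - Finsupp.single i 1 = s := by
  ext j
  rcases eq_or_ne j i with rfl | hj
  · simp [h]
  · simp [Finsupp.single_apply, (Ne.symm hj : i ≠ j)]

lemma finsupp_add_sub_single (s : Fin n →₀ ℕ) (i : Fin n) (h : s i ≠ 0) :
    Finsupp.single i 1 + (s - Finsupp.single i 1) = s := by
  ext j
  rcases eq_or_ne j i with rfl | hj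
  · simp only [Finsupp.add_apply, Finsupp.tsub_apply, Finsupp.single_eq_same]
    omega
  · simp [Finsupp.single_apply, (Ne.symm hj : i ≠ j)]

lemma coeff_theta (i : Fin n) (g : MvPolynomial (Fin n) k) (m : Fin n →₀ ℕ) :
    coeff m (X i * pderiv i g) = (m i : k) * coeff m g := by
  classical
  induction g using MvPolynomial.induction_on' with
  | add f g hf hg =>
    rw [map_add, mul_add, coeff_add, coeff_add, hf, hg, mul_add]
  | monomial s a =>
    rw [pderiv_monomial, X, monomial_mul, one_mul, coeff_monomial, coeff_monomial]
    rcases eq_or_ne (s i) 0 with h | h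
    · rw [finsupp_sub_single s i h]
      split_ifs with h1 h2 h2
      · exfalso
        subst h2
        have h3 := congrArg (fun f => f i) h1
        simp at h3
      · rw [h]; simp
      · subst h2; rw [h]; simp
      · ring
    · rw [finsupp_add_sub_single s i h]
      split_ifs with h1
      · subst h1; ring
      · ring

lemma coeff_pderiv (i : Fin n) (g : MvPolynomial (Fin n) k) (m : Fin n →₀ ℕ) :
    coeff m (pderiv i g) = ((m i + 1 : ℕ) : k) * coeff (m + Finsupp.single i 1) g := by
  classical
  induction g using MvPolynomial.induction_on' with
  | add f g hf hg => rw [map_add, coeff_add, coeff_add, hf, hg, mul_add]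
  | monomial s a =>
    rw [pderiv_monomial, coeff_monomial, coeff_monomial]
    rcases eq_or_ne (s i) 0 with h | h
    · rw [finsupp_sub_single s i h]
      split_ifs with h1 h2 h2
      · exfalso; rw [h2] at h; simp at h
      · rw [h]; simp
      · exfalso; rw [h2] at h; simp at h
      · ring
    · have hiff : s - Finsupp.single i 1 = m ↔ s = m + Finsupp.single i 1 := by
        constructor
        · intro h1
          rw [← h1, add_comm, finsupp_add_sub_single s i h]
        · intro h1
          subst h1
          ext j
          rcases eq_or_ne j i with rfl | hj
          · simp
          · simp [Finsupp.single_apply, (Ne.symm hj : i ≠ j)]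
      split_ifs with h1 h2 h2
      · have h3 : s i = m i + 1 := by rw [hiff.mp h1]; simp
        rw [h3]; ring
      · exact absurd (hiff.mp h1) h2
      · exact absurd (hiff.mpr h2) h1
      · ring

/-- The operator `g ↦ X i * ∂ᵢ g` as a linear endomorphism. -/
noncomputable def theta (i : Fin n) : Module.End k (MvPolynomial (Fin n) k) where
  toFun g := X i * pderiv i g
  map_add' f g := by simp only [map_add, mul_add]
  map_smul' c g := by simp only [RingHom.id_apply]; rw [Derivation.map_smul, mul_smul_comm]

lemma theta_apply (i : Fin n) (g : MvPolynomial (Fin n) k) :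
    theta i g = X i * pderiv i g := rfl

lemma coeff_theta_pow (i : Fin n) (j : ℕ) (g : MvPolynomial (Fin n) k) (m : Fin n →₀ ℕ) :
    coeff m ((theta i ^ j) g) = (m i : k) ^ j * coeff m g := by
  induction j generalizing g with
  | zero => simp
  | succ j ih =>
    rw [pow_succ, Module.End.mul_apply, ih, theta_apply, coeff_theta, pow_succ]
    ring

lemma coeff_aeval_theta (i : Fin n) (q : Polynomial k) (g : MvPolynomial (Fin n) k)
    (m : Fin n →₀ ℕ) :
    coeff m ((Polynomial.aeval (theta i) q) g) = q.eval (m i : k) * coeff m g := by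
  rw [Polynomial.aeval_eq_sum_range]
  simp only [LinearMap.sum_apply, LinearMap.smul_apply]
  rw [MvPolynomial.coeff_sum]
  simp only [MvPolynomial.coeff_smul, coeff_theta_pow, smul_eq_mul]
  rw [Polynomial.eval_eq_sum_range, Finset.sum_mul]
  exact Finset.sum_congr rfl fun j _ => by ring

variable (N : Ideal (MvPolynomial (Fin n) k))

lemma theta_pow_mem (hD : ∀ f ∈ N, ∀ i : Fin n, MvPolynomial.pderiv i f ∈ N)
    (i : Fin n) (j : ℕ) {g : MvPolynomial (Fin n) k} (hg : g ∈ N) :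
    (theta i ^ j) g ∈ N := by
  induction j generalizing g with
  | zero => simpa using hg
  | succ j ih =>
    rw [pow_succ, Module.End.mul_apply]
    exact ih (Ideal.mul_mem_left _ _ (hD g hg i))

lemma aeval_theta_mem (hD : ∀ f ∈ N, ∀ i : Fin n, MvPolynomial.pderiv i f ∈ N)
    (i : Fin n) (q : Polynomial k) {g : MvPolynomial (Fin n) k} (hg : g ∈ N) :
    (Polynomial.aeval (theta i) q) g ∈ N := by
  rw [Polynomial.aeval_eq_sum_range]
  simp only [LinearMap.sum_apply, LinearMap.smul_apply, MvPolynomial.smul_eq_C_mul]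
  exact Submodule.sum_mem _ fun j _ => Ideal.mul_mem_left _ _ (theta_pow_mem N hD i j hg)

/-- Lagrange interpolation polynomial: takes value 1 at `a` and 0 at other residues mod `p`. -/
noncomputable def lag (a : ℕ) : Polynomial k :=
  Polynomial.C (∏ j ∈ (Finset.range p).erase a, ((a : k) - (j : k)))⁻¹ *
    ∏ j ∈ (Finset.range p).erase a, (Polynomial.X - Polynomial.C (j : k))

lemma eval_lag {a : ℕ} (ha : a < p) (b : ℕ) (hb : b < p) :
    (lag (k := k) (p := p) a).eval (b : k) = if b = a then 1 else 0 := by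
  rw [lag, Polynomial.eval_mul, Polynomial.eval_C, Polynomial.eval_prod]
  simp only [Polynomial.eval_sub, Polynomial.eval_X, Polynomial.eval_C]
  split_ifs with h
  · subst h
    apply inv_mul_cancel₀
    apply Finset.prod_ne_zero_iff.mpr
    intro j hj
    rw [sub_ne_zero]
    intro hcast
    exact Finset.ne_of_mem_erase hj
      ((CharP.natCast_injOn_Iio k p (Set.mem_Iio.mpr hb)
        (Set.mem_Iio.mpr (Finset.mem_range.mp (Finset.mem_of_mem_erase hj))) hcast).symm)
  · have hz : (∏ j ∈ (Finset.range p).erase a, ((b : k) - (j : k))) = 0 :=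
      Finset.prod_eq_zero (Finset.mem_erase.mpr ⟨h, Finset.mem_range.mpr hb⟩) (sub_self _)
    rw [hz, mul_zero]

lemma natCast_mod (b : ℕ) : ((b % p : ℕ) : k) = (b : k) := by
  conv_rhs => rw [← Nat.mod_add_div b p]
  push_cast
  rw [CharP.cast_eq_zero k p, zero_mul, add_zero]

lemma eval_lag_mod {a : ℕ} (ha : a < p) (b : ℕ) :
    (lag (k := k) (p := p) a).eval (b : k) = if b % p = a then 1 else 0 := by
  rw [← natCast_mod (p := p) b, eval_lag ha _ (Nat.mod_lt _ (Fact.out (p := p.Prime)).pos)]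

open Classical in
/-- Keep only the monomials whose exponent satisfies `P`. -/
noncomputable def pfilter (P : (Fin n →₀ ℕ) → Prop) (g : MvPolynomial (Fin n) k) :
    MvPolynomial (Fin n) k :=
  ∑ m ∈ g.support, if P m then monomial m (coeff m g) else 0

lemma coeff_pfilter (P : (Fin n →₀ ℕ) → Prop) [DecidablePred P] (g : MvPolynomial (Fin n) k)
    (s : Fin n →₀ ℕ) :
    coeff s (pfilter P g) = if P s then coeff s g else 0 := by
  classical
  rw [pfilter, MvPolynomial.coeff_sum]
  rw [Finset.sum_eq_single s (fun m _ hms => ?_) (fun hs => ?_)]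
  · split_ifs with h <;> simp [coeff_monomial]
  · split_ifs with h <;> simp [coeff_monomial, hms]
  · rw [MvPolynomial.notMem_support_iff.mp hs]
    split_ifs <;> simp

lemma pfilter_congr {P Q : (Fin n →₀ ℕ) → Prop} (h : ∀ m, P m ↔ Q m)
    (g : MvPolynomial (Fin n) k) : pfilter P g = pfilter Q g := by
  classical
  apply MvPolynomial.ext
  intro s
  rw [coeff_pfilter, coeff_pfilter, if_congr (h s) rfl rfl]

lemma pfilter_single_mem (hD : ∀ f ∈ N, ∀ i : Fin n, MvPolynomial.pderiv i f ∈ N)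
    (i : Fin n) {a : ℕ} (ha : a < p) {g : MvPolynomial (Fin n) k} (hg : g ∈ N) :
    pfilter (fun m => m i % p = a) g ∈ N := by
  classical
  have key : pfilter (fun m => m i % p = a) g = (Polynomial.aeval (theta i) (lag (k := k) (p := p) a)) g := by
    apply MvPolynomial.ext
    intro s
    rw [coeff_pfilter, coeff_aeval_theta, eval_lag_mod ha]
    split_ifs <;> simp
  rw [key]
  exact aeval_theta_mem N hD i _ hg

lemma pfilter_class_mem (hD : ∀ f ∈ N, ∀ i : Fin n, MvPolynomial.pderiv i f ∈ N)
    (α : Fin n → ℕ) (hα : ∀ i, α i < p) {g : MvPolynomial (Fin n) k} (hg : g ∈ N) :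
    pfilter (fun m => ∀ i, m i % p = α i) g ∈ N := by
  classical
  have key : ∀ s : Finset (Fin n), pfilter (fun m => ∀ i ∈ s, m i % p = α i) g ∈ N := by
    intro s
    induction s using Finset.induction_on with
    | empty =>
      have : pfilter (fun m => ∀ i ∈ (∅ : Finset (Fin n)), m i % p = α i) g = g := by
        apply MvPolynomial.ext
        intro t
        rw [coeff_pfilter, if_pos (by simp)]
      rwa [this]
    | insert i s hi ih =>
      have comp : pfilter (fun m => ∀ j ∈ insert i s, m j % p = α j) g
          = pfilter (fun m => m i % p = α i) (pfilter (fun m => ∀ j ∈ s, m j % p = α j) g) := by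
        apply MvPolynomial.ext
        intro t
        rw [coeff_pfilter, coeff_pfilter, coeff_pfilter]
        by_cases h1 : t i % p = α i <;> by_cases h2 : ∀ j ∈ s, t j % p = α j <;>
          simp [h1, h2, Finset.forall_mem_insert]
      rw [comp]
      exact pfilter_single_mem N hD i (hα i) ih
  have := key Finset.univ
  have heq : pfilter (fun m => ∀ i ∈ Finset.univ, m i % p = α i) g
      = pfilter (fun m => ∀ i, m i % p = α i) g :=
    pfilter_congr (fun m => by simp) g
  rwa [heq] at this

lemma sum_pfilter (g : MvPolynomial (Fin n) k) :
    ∑ α : Fin n → Fin p, pfilter (fun m => ∀ i, m i % p = (α i : ℕ)) g = g := by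
  classical
  have hp : 0 < p := (Fact.out (p := p.Prime)).pos
  apply MvPolynomial.ext
  intro s
  rw [MvPolynomial.coeff_sum]
  simp only [coeff_pfilter]
  set α₀ : Fin n → Fin p := fun i => ⟨s i % p, Nat.mod_lt _ hp⟩ with hα₀
  have step : ∀ α : Fin n → Fin p,
      (if (∀ i, s i % p = (α i : ℕ)) then coeff s g else 0)
        = if α = α₀ then coeff s g else 0 := by
    intro α
    apply if_congr _ rfl rfl
    constructor
    · intro h
      funext i
      exact Fin.ext ((h i).symm)
    · intro h i
      rw [h]
  rw [Finset.sum_congr rfl fun α _ => step α, Finset.sum_ite_eq' Finset.univ α₀,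
    if_pos (Finset.mem_univ _)]

lemma expand_monomial' (d : Fin n →₀ ℕ) (r : k) :
    expand p (monomial d r) = monomial (p • d) r := by
  rw [monomial_eq, monomial_eq, map_mul, expand_C]
  congr 1
  rw [Finsupp.prod, map_prod, Finsupp.prod,
    Finsupp.support_smul_eq (Fact.out (p := p.Prime)).pos.ne']
  apply Finset.prod_congr rfl
  intro i _
  rw [map_pow, expand_X, ← pow_mul, Finsupp.smul_apply, smul_eq_mul]

lemma exists_expand (g : MvPolynomial (Fin n) k) (hdvd : ∀ m ∈ g.support, ∀ i, p ∣ m i) :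
    ∃ f, g = expand p f := by
  refine ⟨∑ m ∈ g.support, monomial (m.mapRange (· / p) (Nat.zero_div _)) (coeff m g), ?_⟩
  rw [map_sum]
  conv_lhs => rw [← support_sum_monomial_coeff g]
  apply Finset.sum_congr rfl
  intro m hm
  rw [expand_monomial']
  have hsm : p • (m.mapRange (· / p) (Nat.zero_div _)) = m := by
    ext i
    rw [Finsupp.smul_apply, Finsupp.mapRange_apply, smul_eq_mul,
      Nat.mul_div_cancel' (hdvd m hm i)]
  rw [hsm]

lemma descend (hD : ∀ f ∈ N, ∀ i : Fin n, MvPolynomial.pderiv i f ∈ N) (d : ℕ) :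
    ∀ g ∈ N, ∀ α : Fin n → ℕ, (∀ i, α i < p) → (∑ i, α i) ≤ d →
    (∀ m ∈ g.support, ∀ i, m i % p = α i) →
    g ∈ Ideal.span {h : MvPolynomial (Fin n) k | h ∈ N ∧ ∃ f, h = expand p f} := by
  classical
  have hp1 : 1 < p := (Fact.out (p := p.Prime)).one_lt
  induction d with
  | zero =>
    intro g hg α hα hsum hsupp
    refine Ideal.subset_span ⟨hg, exists_expand g fun m hm i => ?_⟩
    have h1 := hsupp m hm i
    have h2 : α i = 0 := by
      have := Finset.sum_eq_zero_iff.mp (Nat.le_zero.mp hsum) i (Finset.mem_univ i)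
      exact this
    exact Nat.dvd_of_mod_eq_zero (h2 ▸ h1)
  | succ d ih =>
    intro g hg α hα hsum hsupp
    by_cases hz : ∀ i, α i = 0
    · refine Ideal.subset_span ⟨hg, exists_expand g fun m hm i => ?_⟩
      exact Nat.dvd_of_mod_eq_zero ((hz i) ▸ hsupp m hm i)
    · push_neg at hz
      obtain ⟨i, hi⟩ := hz
      set g' : MvPolynomial (Fin n) k := ((α i : k))⁻¹ • pderiv i g with hg'def
      have hg' : g' ∈ N := by
        rw [hg'def, MvPolynomial.smul_eq_C_mul]
        exact Ideal.mul_mem_left _ _ (hD g hg i)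
      have hcoeff : ∀ m, coeff m g'
          = (α i : k)⁻¹ * (((m i + 1 : ℕ)) : k) * coeff (m + Finsupp.single i 1) g := by
        intro m
        rw [hg'def, MvPolynomial.coeff_smul, coeff_pderiv, smul_eq_mul, mul_assoc]
      set α' : Fin n → ℕ := Function.update α i (α i - 1) with hα'def
      have hα' : ∀ j, α' j < p := fun j => by
        rcases eq_or_ne j i with rfl | hj
        · rw [hα'def, Function.update_self]
          have := hα j
          omega
        · rw [hα'def, Function.update_of_ne hj]
          exact hα j
      have hsum' : (∑ j, α' j) ≤ d := by
        have h1 : ∑ j, α' j = (α i - 1) + ∑ j ∈ Finset.univ \ {i}, α j := by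
          rw [hα'def]
          exact Finset.sum_update_of_mem (Finset.mem_univ i) α (α i - 1)
        have h2 : ∑ j, α j = α i + ∑ j ∈ Finset.univ \ {i}, α j := by
          rw [add_comm]
          rw [Finset.sum_eq_sum_sdiff_singleton_add (Finset.mem_univ i)]
        omega
      have hsupp' : ∀ m ∈ g'.support, ∀ j, m j % p = α' j := by
        intro m hm j
        have hne : coeff (m + Finsupp.single i 1) g ≠ 0 := by
          intro h0
          apply MvPolynomial.mem_support_iff.mp hm
          rw [hcoeff, h0, mul_zero]
        have hmem : m + Finsupp.single i 1 ∈ g.support := MvPolynomial.mem_support_iff.mpr hne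
        have hall := hsupp _ hmem
        rcases eq_or_ne j i with rfl | hj
        · have h1 : (m j + 1) % p = α j := by
            have := hall j
            rwa [Finsupp.add_apply, Finsupp.single_eq_same] at this
          rw [hα'def, Function.update_self]
          have h2 : (m j + 1) % p = (m j % p + 1) % p := by
            conv_lhs => rw [Nat.add_mod, Nat.mod_eq_of_lt hp1]
          have h3 : m j % p < p := Nat.mod_lt _ (by omega)
          rw [h2] at h1
          rcases eq_or_lt_of_le (Nat.succ_le_of_lt h3) with h4 | h4
          · exfalso
            have h5 : m j % p + 1 = p := h4
            rw [h5, Nat.mod_self] at h1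
            omega
          · rw [Nat.mod_eq_of_lt h4] at h1
            omega
        · have h1 := hall j
          rw [Finsupp.add_apply, Finsupp.single_apply, if_neg (Ne.symm hj : i ≠ j),
            add_zero] at h1
          rw [hα'def, Function.update_of_ne hj]
          exact h1
      have hkey : g = X i * g' := by
        apply MvPolynomial.ext
        intro m
        rw [coeff_X_mul']
        split_ifs with h
        · have hmi : m i ≠ 0 := by
            rwa [Finsupp.mem_support_iff] at h
          rw [hcoeff (m - Finsupp.single i 1)]
          have e1 : (m - Finsupp.single i 1 : Fin n →₀ ℕ) i + 1 = m i := by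
            rw [Finsupp.tsub_apply, Finsupp.single_eq_same]
            omega
          have e2 : (m - Finsupp.single i 1) + Finsupp.single i 1 = m := by
            rw [add_comm]
            exact finsupp_add_sub_single m i hmi
          rw [e1, e2]
          by_cases hmg : coeff m g = 0
          · rw [hmg, mul_zero]
          · have hmm : m ∈ g.support := MvPolynomial.mem_support_iff.mpr hmg
            have h1 : (m i : k) = (α i : k) := by
              rw [← natCast_mod (p := p) (m i), hsupp m hmm i]
            have h2 : (α i : k) ≠ 0 := by
              rw [Ne, CharP.cast_eq_zero_iff k p]
              exact Nat.not_dvd_of_pos_of_lt (Nat.pos_of_ne_zero hi) (hα i)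
            rw [h1, inv_mul_cancel₀ h2, one_mul]
        · have hmi : m i = 0 := by
            rw [Finsupp.mem_support_iff] at h
            omega
          by_contra hmg
          have hmm : m ∈ g.support := MvPolynomial.mem_support_iff.mpr hmg
          have := hsupp m hmm i
          rw [hmi, Nat.zero_mod] at this
          exact hi this.symm
      rw [hkey]
      exact Ideal.mul_mem_left _ _ (ih g' hg' α' hα' hsum' hsupp')

end Stmt9

theorem stmt_9 {k : Type*} [Field k] {p n : ℕ} [Fact p.Prime] [CharP k p]
    (N : Ideal (MvPolynomial (Fin n) k))
    (hgr : ∀ f ∈ N, ∀ i : ℕ, MvPolynomial.homogeneousComponent i f ∈ N)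
    (hD : ∀ f ∈ N, ∀ i : Fin n, MvPolynomial.pderiv i f ∈ N) :
    ∃ S : Set (MvPolynomial (Fin n) k),
      (∀ g ∈ S, ∃ f : MvPolynomial (Fin n) k, g = MvPolynomial.expand p f) ∧
      N = Ideal.span S := by
  classical
  refine ⟨{h | h ∈ N ∧ ∃ f, h = MvPolynomial.expand p f}, fun g hg => hg.2, ?_⟩
  apply le_antisymm
  · intro g hg
    rw [← Stmt9.sum_pfilter (p := p) g]
    apply Ideal.sum_mem
    intro α _
    have hmem : Stmt9.pfilter (fun m => ∀ i, m i % p = ((α i : ℕ))) g ∈ N :=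
      Stmt9.pfilter_class_mem N hD (fun i => (α i : ℕ)) (fun i => (α i).isLt) hg
    apply Stmt9.descend N hD (∑ i, ((α i : ℕ))) _ hmem (fun i => (α i : ℕ))
      (fun i => (α i).isLt) le_rfl ?_
    intro m hm i
    have hcm := MvPolynomial.mem_support_iff.mp hm
    rw [Stmt9.coeff_pfilter] at hcm
    by_cases hc : ∀ j, m j % p = ((α j : ℕ))
    · exact hc i
    · rw [if_neg hc] at hcm
      exact absurd rfl hcm
  · rw [Ideal.span_le]
    exact fun g hg => hg.1
end

section
/- Let k be a field of characteristic p and f ∈ k[x_1, ..., x_n] homogeneous. Writing f = ∑_{i=0}^{p-1} x_1^i f_i(x_1^p, x_2, ..., x_n), if a subspace N containing f is stable under multiplication by x_1 and under ∂/∂x_1, then each summand x_1^i f_i(x_1^p, x_2, ..., x_n) lies in N. -/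
open MvPolynomial

lemma eig_aux {k M : Type*} [Field k] [AddCommGroup M] [Module k M]
    (N : Submodule k M) (D : M →ₗ[k] M) (hD : ∀ m ∈ N, D m ∈ N) :
    ∀ (S : Finset ℕ) (c : ℕ → k), Set.InjOn c S → ∀ F : ℕ → M,
      (∀ i ∈ S, D (F i) = c i • F i) → (∑ i ∈ S, F i) ∈ N → ∀ i ∈ S, F i ∈ N := by
  intro S
  induction S using Finset.strongInduction with
  | _ S ih =>
    intro c hinj F heig hsum i hi
    have hS' : S.erase i ⊂ S := Finset.erase_ssubset hi
    set F' : ℕ → M := fun j => (c j - c i) • F j with hF'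
    have hsum' : (∑ j ∈ S.erase i, F' j) ∈ N := by
      have h1 : D (∑ j ∈ S, F j) - c i • (∑ j ∈ S, F j) ∈ N :=
        N.sub_mem (hD _ hsum) (N.smul_mem _ hsum)
      have h2 : D (∑ j ∈ S, F j) - c i • (∑ j ∈ S, F j) = ∑ j ∈ S, F' j := by
        rw [map_sum, Finset.smul_sum, ← Finset.sum_sub_distrib]
        exact Finset.sum_congr rfl fun j hj => by rw [heig j hj]; exact (sub_smul _ _ _).symm
      have h3 : ∑ j ∈ S.erase i, F' j = ∑ j ∈ S, F' j :=
        Finset.sum_erase S (by rw [hF']; simp)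
      rw [h3, ← h2]
      exact h1
    have heig' : ∀ j ∈ S.erase i, D (F' j) = c j • F' j := by
      intro j hj
      rw [hF']
      simp only [map_smul, heig j (Finset.mem_of_mem_erase hj)]
      rw [smul_comm]
    have hFj : ∀ j ∈ S.erase i, F j ∈ N := by
      intro j hj
      have hmem := ih _ hS' c (hinj.mono (by exact_mod_cast hS'.subset)) F' heig' hsum' j hj
      have hne : c j - c i ≠ 0 := sub_ne_zero.2 fun h =>
        (Finset.ne_of_mem_erase hj) (hinj (Finset.mem_coe.2 (Finset.mem_of_mem_erase hj))
          (Finset.mem_coe.2 hi) h)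
      have h2 := N.smul_mem (c j - c i)⁻¹ hmem
      rwa [hF', smul_smul, inv_mul_cancel₀ hne, one_smul] at h2
    have hrepr : F i = (∑ j ∈ S, F j) - ∑ j ∈ S.erase i, F j := by
      rw [← Finset.sum_erase_add S F hi]; abel
    rw [hrepr]
    exact N.sub_mem hsum (Submodule.sum_mem N hFj)

lemma pderiv_aeval_zero {k : Type*} [Field k] {p n : ℕ} [CharP k p]
    (q : MvPolynomial (Fin (n + 1)) k) :
    MvPolynomial.pderiv 0 (MvPolynomial.aeval (fun j : Fin (n + 1) =>
        if j = 0 then (MvPolynomial.X 0 : MvPolynomial (Fin (n + 1)) k) ^ p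
        else MvPolynomial.X j) q) = 0 := by
  induction q using MvPolynomial.induction_on with
  | C a => simp
  | add q1 q2 h1 h2 => rw [map_add, map_add, h1, h2, add_zero]
  | mul_X q j h =>
    rw [map_mul, pderiv_mul, h, zero_mul, zero_add, aeval_X]
    by_cases hj : j = 0
    · subst hj
      rw [if_pos rfl, pderiv_pow, pderiv_X_self, mul_one]
      have : ((p : MvPolynomial (Fin (n + 1)) k)) = 0 := by
        rw [← C_eq_coe_nat, CharP.cast_eq_zero, map_zero]
      rw [this, zero_mul, mul_zero]
    · rw [if_neg hj, pderiv_X_of_ne (by simpa using hj), mul_zero]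

theorem stmt_10 {k : Type*} [Field k] {p n : ℕ} [Fact p.Prime] [CharP k p]
    (N : Submodule k (MvPolynomial (Fin (n + 1)) k))
    (hx : ∀ f ∈ N, MvPolynomial.X 0 * f ∈ N)
    (hd : ∀ f ∈ N, MvPolynomial.pderiv 0 f ∈ N)
    (f : MvPolynomial (Fin (n + 1)) k) (hf : f ∈ N)
    (e : ℕ) (hfh : f.IsHomogeneous e)
    (g : ℕ → MvPolynomial (Fin (n + 1)) k)
    (hdecomp : f = ∑ i ∈ Finset.range p, MvPolynomial.X 0 ^ i *
        (MvPolynomial.aeval (fun j : Fin (n + 1) =>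
            if j = 0 then (MvPolynomial.X 0 : MvPolynomial (Fin (n + 1)) k) ^ p
            else MvPolynomial.X j) (g i))) :
    ∀ i ∈ Finset.range p,
      MvPolynomial.X 0 ^ i *
        (MvPolynomial.aeval (fun j : Fin (n + 1) =>
            if j = 0 then (MvPolynomial.X 0 : MvPolynomial (Fin (n + 1)) k) ^ p
            else MvPolynomial.X j) (g i)) ∈ N := by
  set u : Fin (n + 1) → MvPolynomial (Fin (n + 1)) k := fun j =>
    if j = 0 then (MvPolynomial.X 0 : MvPolynomial (Fin (n + 1)) k) ^ p
    else MvPolynomial.X j with hu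
  set D : MvPolynomial (Fin (n + 1)) k →ₗ[k] MvPolynomial (Fin (n + 1)) k :=
    (LinearMap.mulLeft k (MvPolynomial.X 0)).comp (MvPolynomial.pderiv 0).toLinearMap with hD
  have hDN : ∀ m ∈ N, D m ∈ N := fun m hm => hx _ (hd _ hm)
  set F : ℕ → MvPolynomial (Fin (n + 1)) k := fun i =>
    MvPolynomial.X 0 ^ i * MvPolynomial.aeval u (g i) with hF
  have heig : ∀ i ∈ Finset.range p, D (F i) = ((i : k)) • F i := by
    intro i _
    simp only [hD, hF, LinearMap.comp_apply, Derivation.coeFn_coe, LinearMap.mulLeft_apply]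
    rw [pderiv_mul, pderiv_aeval_zero, mul_zero, add_zero]
    cases i with
    | zero => simp
    | succ m =>
      rw [pderiv_pow, pderiv_X_self, mul_one, MvPolynomial.smul_eq_C_mul,
        ← MvPolynomial.C_eq_coe_nat]
      simp only [Nat.succ_sub_one]
      ring
  have hinj : Set.InjOn (fun i : ℕ => (i : k)) (Finset.range p) := by
    intro a ha b hb hab
    exact CharP.natCast_injOn_Iio k p (by simpa using ha) (by simpa using hb) hab
  exact eig_aux N D hDN (Finset.range p) (fun i => (i : k)) hinj F heig
    (by rw [← hdecomp]; exact hf)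
end

section
/- Let A = ⊕_{i=0}^{d} A_i be a finite-dimensional graded commutative algebra over a field with A_0 = k. Then A is Frobenius (i.e., A_d is one-dimensional and the multiplication pairing A_i × A_{d-i} → A_d is non-degenerate for all i) if and only if the annihilator in A of the augmentation ideal A_+ = ⊕_{i>0} A_i is one-dimensional. -/
open DirectSum

/-- If `a' * b = 0` with `b` homogeneous of degree `j`, then each homogeneous
component of `a'` also annihilates `b`. -/
lemma component_annihilates {k A : Type*} [Field k] [CommRing A] [Algebra k A]
    (𝒜 : ℕ → Submodule k A) [GradedAlgebra 𝒜] {a' b : A} {j : ℕ}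
    (hb : b ∈ 𝒜 j) (hab : a' * b = 0) (i : ℕ) :
    (DirectSum.decompose 𝒜 a' i : A) * b = 0 := by
  have h := DirectSum.coe_decompose_mul_add_of_right_mem 𝒜 (i := i) (a := a') hb
  rw [hab] at h
  simpa using h.symm

theorem stmt_11 {k A : Type*} [Field k] [CommRing A] [Algebra k A]
    [FiniteDimensional k A] (𝒜 : ℕ → Submodule k A) [GradedAlgebra 𝒜]
    (d : ℕ) (h0 : 𝒜 0 = Submodule.span k {(1 : A)})
    (htop : 𝒜 d ≠ ⊥) (habove : ∀ i : ℕ, d < i → 𝒜 i = ⊥) :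
    (Module.finrank k (𝒜 d) = 1 ∧
      ∀ i ≤ d, ∀ a ∈ 𝒜 i, (∀ b ∈ 𝒜 (d - i), a * b = 0) → a = 0)
    ↔ (∃ a : A, a ≠ 0 ∧ (∀ i : ℕ, 0 < i → ∀ b ∈ 𝒜 i, a * b = 0) ∧
        ∀ a' : A, (∀ i : ℕ, 0 < i → ∀ b ∈ 𝒜 i, a' * b = 0) →
          ∃ c : k, a' = c • a) := by
  classical
  constructor
  · rintro ⟨hrk, hnd⟩
    obtain ⟨a, ha, ha0⟩ := Submodule.exists_mem_ne_zero_of_ne_bot htop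
    refine ⟨a, ha0, ?_, ?_⟩
    · intro i hi b hb
      have : a * b ∈ 𝒜 (d + i) := SetLike.mul_mem_graded ha hb
      rw [habove (d + i) (by omega)] at this
      simpa using this
    · intro a' ha'
      -- each homogeneous component of a' of degree ≠ d vanishes
      have hcomp : ∀ i : ℕ, i ≠ d → (DirectSum.decompose 𝒜 a' i : A) = 0 := by
        intro i hi
        rcases lt_or_gt_of_ne hi with hlt | hgt
        · refine hnd i (le_of_lt hlt) _ (SetLike.coe_mem _) ?_
          intro b hb
          exact component_annihilates 𝒜 hb
            (ha' (d - i) (by omega) b hb) i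
        · have h : ∀ z : A, z ∈ 𝒜 i → z = 0 := by
            rw [habove i hgt]; simp
          exact h _ (SetLike.coe_mem _)
      have hsum : a' = (DirectSum.decompose 𝒜 a' d : A) := by
        conv_lhs => rw [← DirectSum.sum_support_decompose 𝒜 a']
        rcases em (d ∈ (DirectSum.decompose 𝒜 a').support) with hd | hd
        · exact Finset.sum_eq_single_of_mem d hd (fun i _ hne => hcomp i hne)
        · rw [DFinsupp.notMem_support_iff.mp hd]
          push_cast
          exact Finset.sum_eq_zero fun i hi =>
            hcomp i (by rintro rfl; exact hd hi)
      -- 𝒜 d is spanned by a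
      have hspan : Submodule.span k {(⟨a, ha⟩ : 𝒜 d)} = ⊤ := by
        have := (finrank_eq_one_iff_of_nonzero (⟨a, ha⟩ : 𝒜 d)
          (by simpa [Subtype.ext_iff] using ha0)).mp hrk
        exact this
      have hmem : (DirectSum.decompose 𝒜 a' d) ∈
          Submodule.span k {(⟨a, ha⟩ : 𝒜 d)} := hspan ▸ Submodule.mem_top
      obtain ⟨c, hc⟩ := Submodule.mem_span_singleton.mp hmem
      refine ⟨c, ?_⟩
      rw [hsum, ← hc]
      rfl
  · rintro ⟨a, ha0, hann, huniq⟩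
    -- a lies in 𝒜 d and spans it
    obtain ⟨x, hx, hx0⟩ := Submodule.exists_mem_ne_zero_of_ne_bot htop
    have hXann : ∀ y ∈ 𝒜 d, (∀ i : ℕ, 0 < i → ∀ b ∈ 𝒜 i, y * b = 0) := by
      intro y hy i hi b hb
      have : y * b ∈ 𝒜 (d + i) := SetLike.mul_mem_graded hy hb
      rw [habove (d + i) (by omega)] at this
      simpa using this
    obtain ⟨c, hc⟩ := huniq x (hXann x hx)
    have hcne : c ≠ 0 := by rintro rfl; simp at hc; exact hx0 hc
    have had : a ∈ 𝒜 d := by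
      have : a = c⁻¹ • x := by rw [hc, smul_smul, inv_mul_cancel₀ hcne, one_smul]
      rw [this]; exact Submodule.smul_mem _ _ hx
    have hspan : 𝒜 d = Submodule.span k {a} := by
      apply le_antisymm
      · intro y hy
        obtain ⟨c', hc'⟩ := huniq y (hXann y hy)
        rw [hc']
        exact Submodule.smul_mem _ _ (Submodule.mem_span_singleton_self a)
      · rw [Submodule.span_singleton_le_iff_mem]; exact had
    constructor
    · rw [hspan]; exact finrank_span_singleton ha0
    · intro i hi x hxi hxb
      by_contra hxne
      -- let n be the greatest degree such that x * 𝒜 n ≠ 0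
      set P : ℕ → Prop := fun n => ∃ y ∈ 𝒜 n, x * y ≠ 0 with hP
      have hP0 : P 0 := ⟨1, SetLike.one_mem_graded 𝒜, by simpa using hxne⟩
      set n := Nat.findGreatest P d with hn
      have hPn : P n := Nat.findGreatest_spec (Nat.zero_le d) hP0
      have hmax : ∀ m, n < m → ∀ z ∈ 𝒜 m, x * z = 0 := by
        intro m hm z hz
        by_cases hmd : m ≤ d
        · by_contra hne
          exact Nat.findGreatest_is_greatest hm hmd ⟨z, hz, hne⟩
        · have : 𝒜 m = ⊥ := habove m (by omega)
          rw [this] at hz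
          simp_all
      obtain ⟨y, hy, hxy⟩ := hPn
      -- x * y annihilates all positive degrees
      have hxyann : ∀ j : ℕ, 0 < j → ∀ b ∈ 𝒜 j, (x * y) * b = 0 := by
        intro j hj b hb
        rw [mul_assoc]
        exact hmax (n + j) (by omega) _ (SetLike.mul_mem_graded hy hb)
      obtain ⟨c', hc'⟩ := huniq (x * y) hxyann
      have hxyd : x * y ∈ 𝒜 d := by rw [hc']; exact Submodule.smul_mem _ _ had
      have hxyin : x * y ∈ 𝒜 (i + n) := SetLike.mul_mem_graded hxi hy
      have hind : i + n = d := by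
        by_contra hne
        have h1 : (DirectSum.decompose 𝒜 (x * y) d : A) = x * y :=
          DirectSum.decompose_of_mem_same 𝒜 hxyd
        have h2 : (DirectSum.decompose 𝒜 (x * y) d : A) = 0 :=
          DirectSum.decompose_of_mem_ne 𝒜 hxyin hne
        rw [h2] at h1; exact hxy h1.symm
      have hnd : n = d - i := by omega
      exact hxy (hxb y (hnd ▸ hy))
end
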